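/- Let k ∈ ℤ with k ≠ 0, let f : ℤ → F be any function, and let R : A_ω → A_ω be the F-linear map determined by R(L_m) = f(m+k)·L_{m+k} for all m ∈ ℤ. Then R is a Rota–Baxter operator of weight 1 on A_ω if and only if f(m) = 0 for all m ∈ ℤ (equivalently, R = 0). -/

import Mathlib

/-- The determinant `D(l,m,n)` defining the structure constants of the simple
3-Lie algebra `A_ω`. -/
noncomputable def Dw (F : Type*) [Field F] (l m n : ℤ) : F :=
  (-1 : F) ^ l * ((n : F) - (m : F)) - (-1 : F) ^ m * ((n : F) - (l : F)) +
    (-1 : F) ^ n * ((m : F) - (l : F))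

/-- The unique `F`-trilinear bracket on `A_ω = ℤ →₀ F` with
`[L_l, L_m, L_n] = D(l,m,n) • L_{l+m+n-1}` on basis vectors. -/
noncomputable def tripleBracket (F : Type*) [Field F] (x y z : ℤ →₀ F) : ℤ →₀ F :=
  x.sum fun l a => y.sum fun m b => z.sum fun n c =>
    Finsupp.single (l + m + n - 1) (a * b * c * Dw F l m n)

lemma tb_single (F : Type*) [Field F] (l m n : ℤ) (a b c : F) :
    tripleBracket F (Finsupp.single l a) (Finsupp.single m b) (Finsupp.single n c) =
      Finsupp.single (l + m + n - 1) (a * b * c * Dw F l m n) := by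
  simp only [tripleBracket, Finsupp.sum_single_index, zero_mul, mul_zero,
    Finsupp.single_zero, Finsupp.sum_zero_index]

lemma tb_zero_left (F : Type*) [Field F] (y z : ℤ →₀ F) : tripleBracket F 0 y z = 0 := by
  simp only [tripleBracket, Finsupp.sum_zero_index]

lemma Dw01_ne_zero (F : Type*) [Field F] [CharZero F] (n : ℤ) (h0 : n ≠ 0) (h1 : n ≠ 1) :
    Dw F 0 1 n ≠ 0 := by
  unfold Dw
  rcases Int.even_or_odd n with he | ho
  · rw [he.neg_one_zpow]
    push_cast
    intro hc
    have : (n : F) = 0 := by linear_combination hc / 2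
    exact h0 (by exact_mod_cast this)
  · rw [ho.neg_one_zpow]
    push_cast
    intro hc
    have : (n : F) = 1 := by linear_combination hc / 2
    exact h1 (by exact_mod_cast this)

lemma Dw21_ne_zero (F : Type*) [Field F] [CharZero F] (n : ℤ) (h : n = -2 ∨ n = -1) :
    Dw F 2 1 n ≠ 0 := by
  unfold Dw
  rcases h with rfl | rfl <;> norm_num

theorem statement0 (F : Type*) [Field F] [CharZero F] (k : ℤ) (hk : k ≠ 0)
    (f : ℤ → F) (R : (ℤ →₀ F) →ₗ[F] (ℤ →₀ F))
    (hR : ∀ m : ℤ, R (Finsupp.single m 1) = f (m + k) • Finsupp.single (m + k) (1 : F)) :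
    (∀ x₁ x₂ x₃ : ℤ →₀ F,
        tripleBracket F (R x₁) (R x₂) (R x₃) =
          R (tripleBracket F (R x₁) (R x₂) x₃ + tripleBracket F (R x₁) x₂ (R x₃) +
              tripleBracket F x₁ (R x₂) (R x₃) + tripleBracket F (R x₁) x₂ x₃ +
              tripleBracket F x₁ (R x₂) x₃ + tripleBracket F x₁ x₂ (R x₃) +
              tripleBracket F x₁ x₂ x₃)) ↔
      ∀ m : ℤ, f m = 0 := by
  have hRs : ∀ (s : ℤ) (v : F),
      R (Finsupp.single s v) = Finsupp.single (s + k) (v * f (s + k)) := by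
    intro s v
    have : Finsupp.single s v = v • Finsupp.single s (1 : F) := by
      rw [Finsupp.smul_single', mul_one]
    rw [this, map_smul, hR s, smul_smul, Finsupp.smul_single', mul_one]
  constructor
  · intro h
    -- key: the coefficient of the lowest degree term
    have key : ∀ l m n : ℤ, Dw F l m n * f (l + m + n - 1 + k) = 0 := by
      intro l m n
      have h1 := h (Finsupp.single l 1) (Finsupp.single m 1) (Finsupp.single n 1)
      rw [hRs, hRs, hRs] at h1
      rw [tb_single, tb_single, tb_single, tb_single, tb_single, tb_single, tb_single,
        tb_single] at h1
      rw [map_add, map_add, map_add, map_add, map_add, map_add] at h1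
      rw [hRs, hRs, hRs, hRs, hRs, hRs, hRs] at h1
      have h2 := DFunLike.congr_fun h1 (l + m + n - 1 + k)
      simp only [Finsupp.add_apply, Finsupp.single_apply] at h2
      rw [if_neg (by omega), if_neg (by omega), if_neg (by omega), if_neg (by omega),
        if_neg (by omega), if_neg (by omega), if_neg (by omega), if_pos trivial] at h2
      simpa using h2.symm
    intro t
    set s : ℤ := t - k + 1 with hs
    by_cases hcase : s = 1 ∨ s = 2
    · have hD : Dw F 2 1 (s - 3) ≠ 0 := Dw21_ne_zero F (s - 3) (by omega)
      have hkey := key 2 1 (s - 3)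
      have harg : 2 + 1 + (s - 3) - 1 + k = t := by omega
      rw [harg] at hkey
      exact (mul_eq_zero.mp hkey).resolve_left hD
    · have hD : Dw F 0 1 (s - 1) ≠ 0 :=
        Dw01_ne_zero F (s - 1) (by omega) (by omega)
      have hkey := key 0 1 (s - 1)
      have harg : 0 + 1 + (s - 1) - 1 + k = t := by omega
      rw [harg] at hkey
      exact (mul_eq_zero.mp hkey).resolve_left hD
  · intro hf x₁ x₂ x₃
    have hR0 : ∀ x : ℤ →₀ F, R x = 0 := by
      intro x
      induction x using Finsupp.induction_linear with
      | zero => exact map_zero R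
      | add a b ha hb => rw [map_add, ha, hb, add_zero]
      | single s v => rw [hRs, hf, mul_zero, Finsupp.single_zero]
    rw [hR0 x₁, hR0 x₂, hR0 x₃, hR0, tb_zero_left]
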